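/- The Reidemeister number of the automorphism φ of G equals 4; i.e., G has exactly 4 equivalence classes under the relation h ~ g·h·φ(g)⁻¹. -/

import Mathlib

/-- The group of automorphisms of ℤ² under composition, written multiplicatively. -/
instance : Group (AddAut (ℤ × ℤ)) where
  mul g h := AddEquiv.trans h g
  one := AddEquiv.refl _
  inv := AddEquiv.symm
  mul_assoc _ _ _ := rfl
  one_mul _ := rfl
  mul_one _ := rfl
  inv_mul_cancel := AddEquiv.self_trans_symm

@[simp] lemma AddAut.zz_mul_apply (e f : AddAut (ℤ × ℤ)) (p : ℤ × ℤ) : (e * f) p = e (f p) := rfl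
@[simp] lemma AddAut.zz_one_apply (p : ℤ × ℤ) : (1 : AddAut (ℤ × ℤ)) p = p := rfl
@[simp] lemma AddAut.zz_inv_apply_self (e : AddAut (ℤ × ℤ)) (p : ℤ × ℤ) : e⁻¹ (e p) = p :=
  e.symm_apply_apply p
@[simp] lemma AddAut.zz_apply_inv_self (e : AddAut (ℤ × ℤ)) (p : ℤ × ℤ) : e (e⁻¹ p) = p :=
  e.apply_symm_apply p

/-- The automorphism of ℤ² given by the matrix A = [[2,1],[1,1]]. -/
def α : AddAut (ℤ × ℤ) where
  toFun p := (2 * p.1 + p.2, p.1 + p.2)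
  invFun p := (p.1 - p.2, -p.1 + 2 * p.2)
  left_inv p := by obtain ⟨x, y⟩ := p; simp only [Prod.mk.injEq]; constructor <;> ring
  right_inv p := by obtain ⟨x, y⟩ := p; simp only [Prod.mk.injEq]; constructor <;> ring
  map_add' p q := by simp only [Prod.fst_add, Prod.snd_add, Prod.mk_add_mk, Prod.mk.injEq]; constructor <;> ring

/-- The automorphism of ℤ² given by the matrix M = [[0,1],[-1,0]]. -/
def μ : AddAut (ℤ × ℤ) where
  toFun p := (p.2, -p.1)
  invFun p := (-p.2, p.1)
  left_inv p := by simp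
  right_inv p := by simp
  map_add' p q := by simp only [Prod.fst_add, Prod.snd_add, Prod.mk_add_mk, Prod.mk.injEq]; constructor <;> first | trivial | ring

/-- The semidirect product G = ℤ² ⋊_α ℤ. -/
@[ext] structure G where
  x : ℤ × ℤ
  n : ℤ

instance : Mul G := ⟨fun g h => ⟨g.x + (α ^ g.n) h.x, g.n + h.n⟩⟩
instance : One G := ⟨⟨0, 0⟩⟩
instance : Inv G := ⟨fun g => ⟨-((α ^ (-g.n)) g.x), -g.n⟩⟩

lemma G.mul_def (g h : G) : g * h = ⟨g.x + (α ^ g.n) h.x, g.n + h.n⟩ := rfl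
lemma G.one_def : (1 : G) = ⟨0, 0⟩ := rfl
lemma G.inv_def (g : G) : g⁻¹ = ⟨-((α ^ (-g.n)) g.x), -g.n⟩ := rfl

instance : Group G where
  mul_assoc a b c := by
    ext : 1
    · show (a.x + (α ^ a.n) b.x) + (α ^ (a.n + b.n)) c.x
        = a.x + (α ^ a.n) (b.x + (α ^ b.n) c.x)
      rw [zpow_add, AddAut.zz_mul_apply, map_add]; abel
    · show a.n + b.n + c.n = a.n + (b.n + c.n); ring
  one_mul a := by
    ext : 1
    · show (0 : ℤ × ℤ) + (α ^ (0:ℤ)) a.x = a.x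
      simp
    · show (0 : ℤ) + a.n = a.n; ring
  mul_one a := by
    ext : 1
    · show a.x + (α ^ a.n) 0 = a.x
      simp
    · show a.n + 0 = a.n; ring
  inv_mul_cancel a := by
    ext : 1
    · show -((α ^ (-a.n)) a.x) + (α ^ (-a.n)) a.x = 0
      simp
    · show -a.n + a.n = 0; ring

lemma mu_alpha : μ * α = α⁻¹ * μ := by
  apply AddEquiv.ext
  intro p
  rw [AddAut.zz_mul_apply, AddAut.zz_mul_apply]
  show μ (α p) = α.symm (μ p)
  show ((α p).2, -(α p).1) = α.symm (p.2, -p.1)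
  show ((p.1 + p.2 : ℤ), -(2 * p.1 + p.2)) = (p.2 - (-p.1), -p.2 + 2 * (-p.1))
  simp only [Prod.mk.injEq]; constructor <;> ring

lemma mu_alpha_conj : μ * α * μ⁻¹ = α⁻¹ := by
  rw [mu_alpha, mul_assoc]
  simp

lemma mu_alpha_zpow (n : ℤ) : μ * α ^ n = α ^ (-n) * μ := by
  have h : MulAut.conj μ (α ^ n) = α ^ (-n) := by
    rw [map_zpow, MulAut.conj_apply, mu_alpha_conj, inv_zpow, zpow_neg]
  rw [MulAut.conj_apply] at h
  calc μ * α ^ n = (μ * α ^ n * μ⁻¹) * μ := by group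
    _ = α ^ (-n) * μ := by rw [h]

/-- The automorphism φ((m,k),n) = ((k,-m),-n). -/
def φ : G ≃* G where
  toFun g := ⟨μ g.x, -g.n⟩
  invFun g := ⟨μ⁻¹ g.x, -g.n⟩
  left_inv g := by
    ext : 1
    · show μ⁻¹ (μ g.x) = g.x
      simp
    · simp
  right_inv g := by
    ext : 1
    · show μ (μ⁻¹ g.x) = g.x
      simp
    · simp
  map_mul' g h := by
    ext : 1
    · show μ (g.x + (α ^ g.n) h.x) = μ g.x + (α ^ (-g.n)) (μ h.x)
      rw [map_add]
      congr 1
      calc μ ((α ^ g.n) h.x) = (μ * α ^ g.n) h.x := rfl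
        _ = (α ^ (-g.n) * μ) h.x := by rw [mu_alpha_zpow]
        _ = (α ^ (-g.n)) (μ h.x) := rfl
    · show -(g.n + h.n) = -g.n + -h.n; ring

section ReidemeisterAux

lemma mu_apply (p : ℤ × ℤ) : μ p = (p.2, -p.1) := rfl

lemma alpha_apply (p : ℤ × ℤ) : α p = (2 * p.1 + p.2, p.1 + p.2) := rfl

lemma alpha_zpow_mu (j : ℤ) (u : ℤ × ℤ) : (α ^ j) (μ u) = μ ((α ^ (-j)) u) := by
  have h : α ^ j * μ = μ * α ^ (-j) := by rw [mu_alpha_zpow, neg_neg]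
  calc (α ^ j) (μ u) = (α ^ j * μ) u := rfl
    _ = (μ * α ^ (-j)) u := by rw [h]
    _ = μ ((α ^ (-j)) u) := rfl

lemma two_z : ((2 : ℤ) : ZMod 2) = 0 := by decide

/-- The Reidemeister-class invariant. -/
def inv2 (h : G) : ZMod 2 × ZMod 2 :=
  ((h.n : ZMod 2),
    if Even h.n then
      ((((α ^ (-(h.n / 2))) h.x).1 + ((α ^ (-(h.n / 2))) h.x).2 : ℤ) : ZMod 2)
    else
      ((((α ^ ((1 - h.n) / 2)) h.x).1 : ℤ) : ZMod 2))

/-- Representatives of the four Reidemeister classes. -/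
def rep (c : ZMod 2 × ZMod 2) : G := ⟨((c.2.val : ℤ), 0), (c.1.val : ℤ)⟩

lemma action_formula (g h : G) :
    g * h * (φ g)⁻¹ =
      ⟨g.x + (α ^ g.n) h.x - (α ^ (2 * g.n + h.n)) (μ g.x), h.n + 2 * g.n⟩ := by
  have hφ : φ g = ⟨μ g.x, -g.n⟩ := rfl
  rw [hφ, G.inv_def, G.mul_def, G.mul_def]
  ext : 1
  · show (g.x + (α ^ g.n) h.x) + (α ^ (g.n + h.n)) (-((α ^ (- -g.n)) (μ g.x))) = _
    rw [neg_neg, map_neg, ← AddAut.zz_mul_apply, ← zpow_add,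
      show g.n + h.n + g.n = 2 * g.n + h.n from by ring]
    abel
  · show g.n + h.n + - -g.n = h.n + 2 * g.n
    ring

lemma inv2_invariant (g h : G) : inv2 (g * h * (φ g)⁻¹) = inv2 h := by
  rw [action_formula]
  obtain ⟨w, m⟩ := g
  obtain ⟨v, n⟩ := h
  simp only [inv2]
  rcases Int.even_or_odd n with ⟨k, hk⟩ | ⟨k, hk⟩
  · have h1 : Even (n + 2 * m) := ⟨k + m, by omega⟩
    have h2 : Even n := ⟨k, hk⟩
    rw [if_pos h1, if_pos h2]
    have hd1 : (n + 2 * m) / 2 = k + m := by omega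
    have hd2 : n / 2 = k := by omega
    rw [hd1, hd2]
    simp only [Prod.mk.injEq]
    constructor
    · push_cast
      linear_combination (m : ZMod 2) * two_z
    · have e1 : (α ^ (-(k + m))) (w + (α ^ m) v - (α ^ (2 * m + n)) (μ w))
          = (α ^ (-(k + m))) w + (α ^ (-k)) v - μ ((α ^ (-(k + m))) w) := by
        have hA : (α ^ (-(k + m))) ((α ^ m) v) = (α ^ (-k)) v := by
          rw [← AddAut.zz_mul_apply, ← zpow_add, show -(k + m) + m = -k from by ring]
        have hB : (α ^ (-(k + m))) ((α ^ (2 * m + n)) (μ w)) = μ ((α ^ (-(k + m))) w) := by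
          rw [← AddAut.zz_mul_apply, ← zpow_add,
            show -(k + m) + (2 * m + n) = m + k from by rw [hk]; ring,
            alpha_zpow_mu, show -(m + k) = -(k + m) from by ring]
        rw [map_sub, map_add, hA, hB]
      rw [e1]
      set u1 := (α ^ (-(k + m))) w
      set u2 := (α ^ (-k)) v
      show (((u1 + u2 - μ u1).1 + (u1 + u2 - μ u1).2 : ℤ) : ZMod 2) = _
      rw [mu_apply]
      show (((u1.1 + u2.1 - u1.2) + (u1.2 + u2.2 - -u1.1) : ℤ) : ZMod 2) = _
      push_cast
      linear_combination (u1.1 : ZMod 2) * two_z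
  · have h1 : ¬ Even (n + 2 * m) := by rw [Int.even_iff]; omega
    have h2 : ¬ Even n := by rw [Int.even_iff]; omega
    rw [if_neg h1, if_neg h2]
    have hd1 : (1 - (n + 2 * m)) / 2 = -(k + m) := by omega
    have hd2 : (1 - n) / 2 = -k := by omega
    rw [hd1, hd2]
    simp only [Prod.mk.injEq]
    constructor
    · push_cast
      linear_combination (m : ZMod 2) * two_z
    · have e1 : (α ^ (-(k + m))) (w + (α ^ m) v - (α ^ (2 * m + n)) (μ w))
          = (α ^ (-(k + m))) w + (α ^ (-k)) v - α (μ ((α ^ (-(k + m))) w)) := by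
        have hA : (α ^ (-(k + m))) ((α ^ m) v) = (α ^ (-k)) v := by
          rw [← AddAut.zz_mul_apply, ← zpow_add, show -(k + m) + m = -k from by ring]
        have hB : (α ^ (-(k + m))) ((α ^ (2 * m + n)) (μ w)) = α (μ ((α ^ (-(k + m))) w)) := by
          rw [← AddAut.zz_mul_apply, ← zpow_add,
            show -(k + m) + (2 * m + n) = (m + k) + 1 from by rw [hk]; ring,
            show ((m + k) + 1 : ℤ) = 1 + (m + k) from by ring,
            zpow_add, zpow_one, AddAut.zz_mul_apply, alpha_zpow_mu,
            show -(m + k) = -(k + m) from by ring]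
        rw [map_sub, map_add, hA, hB]
      rw [e1]
      set u1 := (α ^ (-(k + m))) w
      set u2 := (α ^ (-k)) v
      show (((u1 + u2 - α (μ u1)).1 : ℤ) : ZMod 2) = _
      rw [mu_apply, alpha_apply]
      show (((u1.1 + u2.1 - (2 * u1.2 + -u1.1)) : ℤ) : ZMod 2) = _
      push_cast
      linear_combination ((u1.1 - u1.2 : ZMod 2)) * two_z

lemma val_intCast_back : ∀ x : ZMod 2, ((x.val : ℤ) : ZMod 2) = x := by decide

lemma reach (h : G) : ∃ g : G, g * h * (φ g)⁻¹ = rep (inv2 h) := by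
  obtain ⟨v, n⟩ := h
  rcases Int.even_or_odd n with ⟨k, hk⟩ | ⟨k, hk⟩
  · -- even case
    set u : ℤ × ℤ := (α ^ (-k)) v with hu
    set c : ℤ := ((((u.1 + u.2 : ℤ) : ZMod 2)).val : ℤ) with hc
    have hcc : ((c : ℤ) : ZMod 2) = ((u.1 + u.2 : ℤ) : ZMod 2) := val_intCast_back _
    have hdvd : (2 : ℤ) ∣ (c - (u.1 + u.2)) := by
      have h0 : ((c - (u.1 + u.2) : ℤ) : ZMod 2) = 0 := by
        push_cast
        push_cast at hcc
        rw [hcc]; ring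
      exact_mod_cast (ZMod.intCast_zmod_eq_zero_iff_dvd _ 2).mp h0
    obtain ⟨e, he⟩ := hdvd
    -- want (1-μ)w = (c - u.1, -u.2); w = (a,b), a-b = c-u.1, a+b = -u.2
    -- 2e = c - u.1 - u.2 + 2*u.2?? recompute: c - (u.1+u.2) = 2e
    refine ⟨⟨(e, e - (c - u.1)), -k⟩, ?_⟩
    rw [action_formula]
    have hrep : rep (inv2 ⟨v, n⟩) = ⟨(c, 0), 0⟩ := by
      have h2 : Even n := ⟨k, hk⟩
      have hd2 : n / 2 = k := by omega
      have hn0 : ((n : ℤ) : ZMod 2) = 0 := by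
        rw [hk]; push_cast; linear_combination (k : ZMod 2) * two_z
      simp only [inv2, if_pos h2, hd2, rep, hn0]
      rfl
    rw [hrep]
    ext : 1
    · show (e, e - (c - u.1)) + (α ^ (-k)) v - (α ^ (2 * -k + n)) (μ (e, e - (c - u.1))) = (c, 0)
      rw [show 2 * -k + n = 0 from by omega, zpow_zero]
      show (e, e - (c - u.1)) + u - (1 : AddAut (ℤ × ℤ)) (μ (e, e - (c - u.1))) = (c, 0)
      rw [AddAut.zz_one_apply, mu_apply]
      show (e + u.1 - (e - (c - u.1)), (e - (c - u.1)) + u.2 - -e) = (c, 0)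
      simp only [Prod.mk.injEq]
      constructor <;> omega
    · show n + 2 * -k = 0
      omega
  · -- odd case
    set u : ℤ × ℤ := (α ^ (-k)) v with hu
    set c : ℤ := ((((u.1 : ℤ) : ZMod 2)).val : ℤ) with hc
    have hcc : ((c : ℤ) : ZMod 2) = ((u.1 : ℤ) : ZMod 2) := val_intCast_back _
    have hdvd : (2 : ℤ) ∣ (c - u.1) := by
      have h0 : ((c - u.1 : ℤ) : ZMod 2) = 0 := by
        push_cast
        push_cast at hcc
        rw [hcc]; ring
      exact_mod_cast (ZMod.intCast_zmod_eq_zero_iff_dvd _ 2).mp h0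
    obtain ⟨e, he⟩ := hdvd
    refine ⟨⟨(-u.2, -u.2 - e), -k⟩, ?_⟩
    rw [action_formula]
    have hrep : rep (inv2 ⟨v, n⟩) = ⟨(c, 0), 1⟩ := by
      have h2 : ¬ Even n := by rw [Int.even_iff]; omega
      have hd2 : (1 - n) / 2 = -k := by omega
      have hn1 : ((n : ℤ) : ZMod 2) = 1 := by
        rw [hk]; push_cast; linear_combination (k : ZMod 2) * two_z
      simp only [inv2, if_neg h2, hd2, rep, hn1]
      rfl
    rw [hrep]
    ext : 1
    · show (-u.2, -u.2 - e) + (α ^ (-k)) v - (α ^ (2 * -k + n)) (μ (-u.2, -u.2 - e)) = (c, 0)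
      rw [show 2 * -k + n = 1 from by omega, zpow_one, mu_apply, alpha_apply]
      show (-u.2 + u.1 - (2 * (-u.2 - e) + - -u.2), (-u.2 - e) + u.2 - ((-u.2 - e) + - -u.2)) = (c, 0)
      simp only [Prod.mk.injEq]
      constructor <;> omega
    · show n + 2 * -k = 1
      omega

lemma inv2_rep : ∀ c : ZMod 2 × ZMod 2, inv2 (rep c) = c := by decide

end ReidemeisterAux

theorem stmt9 :
    Nat.card (Quot fun h h' : G => ∃ g : G, h' = g * h * (φ g)⁻¹) = 4 := by
  have e : (Quot fun h h' : G => ∃ g : G, h' = g * h * (φ g)⁻¹) ≃ ZMod 2 × ZMod 2 :=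
    { toFun := Quot.lift inv2 (by rintro a b ⟨g, rfl⟩; exact (inv2_invariant g a).symm)
      invFun := fun c => Quot.mk _ (rep c)
      left_inv := by
        intro q
        induction q using Quot.ind with
        | _ h =>
          obtain ⟨g, hg⟩ := reach h
          exact (Quot.sound ⟨g, hg.symm⟩).symm
      right_inv := inv2_rep }
  rw [Nat.card_congr e]
  simp [Nat.card_eq_fintype_card]
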